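/- arXiv:1210.8326 — 4 statements merged into one kernel-verified Lean document; each statement's English description precedes it below -/
import Mathlib

section
/- Let M be even, let s_1 < s_2 < ... < s_M be real numbers, let ρ > 0, and let p = [p_1,...,p_M] ∈ {0,1}^M be a pattern of Hamming weight M/2. Define the thresholds β_k = (s_k + s_{k+1})/2 for k = 1,...,M-1, together with β_0 = -∞ and β_M = +∞. Let Y = s_i + η where η is a zero-mean Gaussian random variable with variance 1/(2ρ), and let the demodulator output the bit p_k when β_{k-1} < Y ≤ β_k. Then the pattern bit-error rate P = (1/M) ∑_{i=1}^{M} Pr{output bit ≠ p_i | transmitted point is s_i} satisfies P = 1/2 + (1/M) ∑_{i=1}^{M} ∑_{k=1}^{M-1} g_{i,k} · Q((β_k − s_i)·√(2ρ)), where g_{i,k} = (p_{k+1} − p_k)(1 − 2 p_i) ∈ {0, ±1} (bits treated as integers). -/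
open MeasureTheory

/-- The Gaussian Q-function `Q(x) = (1/√(2π)) ∫_x^∞ e^{-t²/2} dt`. -/
noncomputable def Qfun (x : ℝ) : ℝ :=
  ∫ t in Set.Ioi x, (Real.sqrt (2 * Real.pi))⁻¹ * Real.exp (-t ^ 2 / 2)

/-- The Gaussian density with mean `μ` and variance `1/(2ρ)`
(the AWGN channel transition density at SNR `ρ`). -/
noncomputable def gaussDens (ρ μ y : ℝ) : ℝ :=
  Real.sqrt (ρ / Real.pi) * Real.exp (-ρ * (y - μ) ^ 2)

/-- The `k`-th decision region (for `k = 1, …, M`) of a threshold demodulator with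
thresholds `β 1 ≤ … ≤ β (M-1)`, together with `β 0 = -∞` and `β M = +∞`:
region `k` is `(β (k-1), β k]`. -/
def region (β : ℕ → ℝ) (M k : ℕ) : Set ℝ :=
  if k = 1 then Set.Iic (β 1)
  else if k = M then Set.Ioi (β (M - 1))
  else Set.Ioc (β (k - 1)) (β k)

/-- A bit viewed as a real number. -/
def bitR (b : Bool) : ℝ := if b then 1 else 0

/- ### Auxiliary lemmas -/

lemma gauss_integrable {ρ : ℝ} (hρ : 0 < ρ) (μ : ℝ) : Integrable (gaussDens ρ μ) := by
  have : Integrable (fun y : ℝ => Real.exp (-ρ * y ^ 2)) := integrable_exp_neg_mul_sq hρ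
  exact (this.comp_sub_right μ).const_mul _

lemma shift_Ioi (f : ℝ → ℝ) (b μ : ℝ) :
    (∫ y in Set.Ioi b, f (y - μ)) = ∫ y in Set.Ioi (b - μ), f y := by
  rw [← integral_indicator measurableSet_Ioi, ← integral_indicator measurableSet_Ioi,
    ← integral_sub_right_eq_self (Set.indicator (Set.Ioi (b - μ)) f) μ]
  congr 1
  ext y
  by_cases h : b < y <;>
    simp [Set.indicator, h, sub_lt_sub_iff_right, lt_sub_iff_add_lt, sub_lt_iff_lt_add]

lemma gauss_Ioi {ρ : ℝ} (hρ : 0 < ρ) (μ b : ℝ) :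
    (∫ y in Set.Ioi b, gaussDens ρ μ y) = Qfun ((b - μ) * Real.sqrt (2 * ρ)) := by
  have hc : 0 < Real.sqrt (2 * ρ) := Real.sqrt_pos.mpr (by linarith)
  have h1 : (∫ y in Set.Ioi b, gaussDens ρ μ y)
      = ∫ y in Set.Ioi (b - μ), Real.sqrt (ρ / Real.pi) * Real.exp (-ρ * y ^ 2) := by
    rw [← shift_Ioi (fun y => Real.sqrt (ρ / Real.pi) * Real.exp (-ρ * y ^ 2)) b μ]
    rfl
  have h2 := MeasureTheory.integral_comp_mul_right_Ioi
    (fun t => (Real.sqrt (2 * Real.pi))⁻¹ * Real.exp (-t ^ 2 / 2)) (b - μ) hc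
  have h3 : (∫ t in Set.Ioi ((b - μ) * Real.sqrt (2 * ρ)),
        (Real.sqrt (2 * Real.pi))⁻¹ * Real.exp (-t ^ 2 / 2))
      = Real.sqrt (2 * ρ) • ∫ x in Set.Ioi (b - μ),
        (Real.sqrt (2 * Real.pi))⁻¹ * Real.exp (-(x * Real.sqrt (2 * ρ)) ^ 2 / 2) := by
    rw [h2, smul_smul, mul_inv_cancel₀ hc.ne', one_smul]
  rw [h1, Qfun, h3, ← integral_smul]
  have hsq : Real.sqrt (2 * ρ) ^ 2 = 2 * ρ := Real.sq_sqrt (by linarith)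
  have hC : Real.sqrt (ρ / Real.pi)
      = Real.sqrt (2 * ρ) * (Real.sqrt (2 * Real.pi))⁻¹ := by
    rw [← Real.sqrt_inv, ← Real.sqrt_mul (by linarith)]
    congr 1
    field_simp
  refine setIntegral_congr_fun measurableSet_Ioi fun x _ => ?_
  have hx : -(x * Real.sqrt (2 * ρ)) ^ 2 / 2 = -ρ * x ^ 2 := by
    rw [mul_pow, hsq]; ring
  rw [hC]
  simp only [smul_eq_mul]
  rw [hx]
  ring

lemma gauss_total {ρ : ℝ} (hρ : 0 < ρ) (μ : ℝ) : (∫ y, gaussDens ρ μ y) = 1 := by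
  have h1 : (∫ y, gaussDens ρ μ y)
      = Real.sqrt (ρ / Real.pi) * ∫ y, Real.exp (-ρ * y ^ 2) := by
    rw [← integral_const_mul]
    rw [← integral_sub_right_eq_self (fun y => Real.sqrt (ρ / Real.pi) * Real.exp (-ρ * y ^ 2)) μ]
    rfl
  rw [h1, integral_gaussian, ← Real.sqrt_mul (by positivity)]
  rw [show ρ / Real.pi * (Real.pi / ρ) = 1 by field_simp]
  exact Real.sqrt_one

lemma gauss_Iic {ρ : ℝ} (hρ : 0 < ρ) (μ b : ℝ) :
    (∫ y in Set.Iic b, gaussDens ρ μ y) = 1 - Qfun ((b - μ) * Real.sqrt (2 * ρ)) := by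
  have h := intervalIntegral.integral_Iic_add_Ioi (b := b)
    ((gauss_integrable hρ μ).integrableOn) ((gauss_integrable hρ μ).integrableOn)
  rw [gauss_total hρ μ, gauss_Ioi hρ μ b] at h
  linarith

lemma gauss_Ioc {ρ : ℝ} (hρ : 0 < ρ) (μ a b : ℝ) (hab : a ≤ b) :
    (∫ y in Set.Ioc a b, gaussDens ρ μ y)
      = Qfun ((a - μ) * Real.sqrt (2 * ρ)) - Qfun ((b - μ) * Real.sqrt (2 * ρ)) := by
  have h := MeasureTheory.setIntegral_union (f := gaussDens ρ μ) (μ := volume)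
    (s := Set.Ioc a b) (t := Set.Ioi b)
    (Set.Ioc_disjoint_Ioi le_rfl) measurableSet_Ioi
    ((gauss_integrable hρ μ).integrableOn) ((gauss_integrable hρ μ).integrableOn)
  rw [Set.Ioc_union_Ioi_eq_Ioi hab] at h
  rw [gauss_Ioi hρ μ a, gauss_Ioi hρ μ b] at h
  linarith

lemma abel_sum (a A : ℕ → ℝ) (M : ℕ) (hM : 1 ≤ M) :
    ∑ k ∈ Finset.Icc 1 M, a k * (A (k - 1) - A k)
      = a 1 * A 0 - a M * A M + ∑ k ∈ Finset.Icc 1 (M - 1), (a (k + 1) - a k) * A k := by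
  induction M, hM using Nat.le_induction with
  | base => simp; ring
  | succ n hn ih =>
    obtain ⟨m, rfl⟩ : ∃ m, n = m + 1 := ⟨n - 1, by omega⟩
    rw [Finset.sum_Icc_succ_top (by omega : 1 ≤ m + 1 + 1), ih]
    have h1 : m + 1 + 1 - 1 = m + 1 := rfl
    have h2 : m + 1 - 1 = m := rfl
    rw [h1, h2, Finset.sum_Icc_succ_top (by omega : 1 ≤ m + 1)]
    ring

lemma count_ne (M : ℕ) (hM : Even M) (p : ℕ → Bool)
    (hp : ((Finset.Icc 1 M).filter (fun i => p i = true)).card = M / 2) :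
    ((Finset.Icc 1 M).filter (fun i => p 1 ≠ p i)).card = M / 2 := by
  cases hp1 : p 1 with
  | false =>
    have he : (Finset.filter (fun i => false ≠ p i) (Finset.Icc 1 M))
        = (Finset.filter (fun i => p i = true) (Finset.Icc 1 M)) := by
      apply Finset.filter_congr; intro i _; cases p i <;> simp
    rw [he]; exact hp
  | true =>
    have h := Finset.card_filter_add_card_filter_not
      (s := Finset.Icc 1 M) (p := fun i => p i = true)
    have he : (Finset.filter (fun i => true ≠ p i) (Finset.Icc 1 M))
        = (Finset.filter (fun i => ¬(p i = true)) (Finset.Icc 1 M)) := by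
      apply Finset.filter_congr; intro i _; cases p i <;> simp
    rw [he]
    obtain ⟨m, rfl⟩ := hM
    rw [Nat.card_Icc] at h
    omega

theorem pattern_ber_midpoints (M : ℕ) (hM : Even M) (hM0 : 0 < M)
    (s : ℕ → ℝ) (hs : ∀ k ∈ Finset.Icc 1 (M - 1), s k < s (k + 1))
    (ρ : ℝ) (hρ : 0 < ρ)
    (p : ℕ → Bool)
    (hp : ((Finset.Icc 1 M).filter (fun i => p i = true)).card = M / 2)
    (β : ℕ → ℝ) (hβ : ∀ k ∈ Finset.Icc 1 (M - 1), β k = (s k + s (k + 1)) / 2) :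
    (M : ℝ)⁻¹ * ∑ i ∈ Finset.Icc 1 M, ∑ k ∈ Finset.Icc 1 M,
        (if p k ≠ p i then ∫ y in region β M k, gaussDens ρ (s i) y else 0)
      = 1 / 2 + (M : ℝ)⁻¹ * ∑ i ∈ Finset.Icc 1 M, ∑ k ∈ Finset.Icc 1 (M - 1),
          (bitR (p (k + 1)) - bitR (p k)) * (1 - 2 * bitR (p i)) *
            Qfun ((β k - s i) * Real.sqrt (2 * ρ)) := by
  have hM2 : 2 ≤ M := by
    obtain ⟨m, rfl⟩ := hM; omega
  have key : ∀ i, (∑ k ∈ Finset.Icc 1 M,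
      (if p k ≠ p i then ∫ y in region β M k, gaussDens ρ (s i) y else 0))
    = (if p 1 ≠ p i then (1:ℝ) else 0)
      + ∑ k ∈ Finset.Icc 1 (M - 1),
          (bitR (p (k + 1)) - bitR (p k)) * (1 - 2 * bitR (p i)) *
            Qfun ((β k - s i) * Real.sqrt (2 * ρ)) := by
    intro i
    set A : ℕ → ℝ := fun k =>
      if k = 0 then 1
      else if k ≤ M - 1 then Qfun ((β k - s i) * Real.sqrt (2 * ρ)) else 0 with hA
    set a : ℕ → ℝ := fun k => if p k ≠ p i then (1:ℝ) else 0 with ha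
    have regint : ∀ k ∈ Finset.Icc 1 M,
        (∫ y in region β M k, gaussDens ρ (s i) y) = A (k - 1) - A k := by
      intro k hk
      simp only [Finset.mem_Icc] at hk
      rcases eq_or_ne k 1 with rfl | hk1
      · rw [region, if_pos rfl, gauss_Iic hρ]
        have h1 : (1:ℕ) ≤ M - 1 := by omega
        simp [hA, h1]
      by_cases hkM : k = M
      · rw [region, if_neg hk1, if_pos hkM, gauss_Ioi hρ, hkM]
        have h1 : M - 1 ≠ 0 := by omega
        have h2 : ¬(M = 0) := by omega
        have h3 : ¬(M ≤ M - 1) := by omega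
        simp [hA, h1, h2, h3]
      · have hk2 : 2 ≤ k := by omega
        have hkM1 : k ≤ M - 1 := by omega
        rw [region, if_neg hk1, if_neg hkM]
        have hb1 : β (k - 1) = (s (k - 1) + s k) / 2 := by
          have h := hβ (k - 1) (by simp only [Finset.mem_Icc]; omega)
          rwa [show k - 1 + 1 = k from by omega] at h
        have hb2 : β k = (s k + s (k + 1)) / 2 :=
          hβ k (by simp only [Finset.mem_Icc]; omega)
        have hs1 : s (k - 1) < s k := by
          have h := hs (k - 1) (by simp only [Finset.mem_Icc]; omega)
          rwa [show k - 1 + 1 = k from by omega] at h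
        have hs2 : s k < s (k + 1) :=
          hs k (by simp only [Finset.mem_Icc]; omega)
        have hle : β (k - 1) ≤ β k := by rw [hb1, hb2]; linarith
        rw [gauss_Ioc hρ _ _ _ hle]
        have h1 : k - 1 ≠ 0 := by omega
        have h2 : k - 1 ≤ M - 1 := by omega
        have h3 : k ≠ 0 := by omega
        simp [hA, h1, h2, h3, hkM1]
    calc (∑ k ∈ Finset.Icc 1 M,
          (if p k ≠ p i then ∫ y in region β M k, gaussDens ρ (s i) y else 0))
        = ∑ k ∈ Finset.Icc 1 M, a k * (A (k - 1) - A k) := by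
          refine Finset.sum_congr rfl fun k hk => ?_
          rw [regint k hk, ha]
          by_cases h : p k ≠ p i <;> simp [h]
      _ = a 1 * A 0 - a M * A M
            + ∑ k ∈ Finset.Icc 1 (M - 1), (a (k + 1) - a k) * A k :=
          abel_sum a A M (by omega)
      _ = (if p 1 ≠ p i then (1:ℝ) else 0)
            + ∑ k ∈ Finset.Icc 1 (M - 1),
                (bitR (p (k + 1)) - bitR (p k)) * (1 - 2 * bitR (p i)) *
                  Qfun ((β k - s i) * Real.sqrt (2 * ρ)) := by
          have hA0 : A 0 = 1 := by simp [hA]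
          have hAM : A M = 0 := by
            have h2 : ¬(M = 0) := by omega
            have h3 : ¬(M ≤ M - 1) := by omega
            simp [hA, h2, h3]
          rw [hA0, hAM, mul_one, mul_zero, sub_zero]
          congr 1
          refine Finset.sum_congr rfl fun k hk => ?_
          simp only [Finset.mem_Icc] at hk
          have hAk : A k = Qfun ((β k - s i) * Real.sqrt (2 * ρ)) := by
            have h3 : k ≠ 0 := by omega
            simp [hA, h3, hk.2]
          rw [hAk, ha]
          cases hpk : p k <;> cases hpk1 : p (k + 1) <;> cases hpi : p i <;>
            simp [bitR, hpk, hpk1, hpi] <;> norm_num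
  have hsplit : (∑ i ∈ Finset.Icc 1 M, ∑ k ∈ Finset.Icc 1 M,
      (if p k ≠ p i then ∫ y in region β M k, gaussDens ρ (s i) y else 0))
    = (∑ i ∈ Finset.Icc 1 M, (if p 1 ≠ p i then (1:ℝ) else 0))
      + ∑ i ∈ Finset.Icc 1 M, ∑ k ∈ Finset.Icc 1 (M - 1),
          (bitR (p (k + 1)) - bitR (p k)) * (1 - 2 * bitR (p i)) *
            Qfun ((β k - s i) * Real.sqrt (2 * ρ)) := by
    rw [Finset.sum_congr rfl fun i _ => key i, Finset.sum_add_distrib]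
  rw [hsplit, mul_add]
  congr 1
  rw [Finset.sum_boole]
  have hcount := count_ne M hM p hp
  rw [hcount]
  obtain ⟨m, rfl⟩ := hM
  have hm : 0 < m := by omega
  rw [show (m + m) / 2 = m from by omega]
  have hmne : ((m:ℝ) + m) ≠ 0 := by positivity
  push_cast
  field_simp
  ring
end

section
/- Let M = 2^m with m ≥ 2 (so that M is divisible by 4). Consider the set of all patterns, i.e., binary vectors p ∈ {0,1}^M with Hamming weight M/2. Define the reflection refl(p) by refl(p)_i = p_{M+1-i} and the inversion inv(p) by inv(p)_i = 1 − p_i. Group patterns into classes by declaring two patterns equivalent when one is obtained from the other by applying reflection, inversion, or their composition (i.e., the class of p is {p, inv(p), refl(p), inv(refl(p))}). Then the number Q of distinct classes is Q = (1/4)·( C(M, M/2) + C(M/2, M/4) + 2^{M/2} ), where C(n,k) denotes the binomial coefficient. -/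
/-- Reflection of a length-`M` bit pattern: `refl(p)_i = p_{M+1-i}` (0-indexed:
`refl(p) i = p (M - 1 - i)`, i.e. `p i.rev`). -/
def prefl (M : ℕ) (p : Fin M → Bool) : Fin M → Bool := fun i => p i.rev

/-- Inversion (coordinatewise binary complement) of a bit pattern. -/
def pinv (M : ℕ) (p : Fin M → Bool) : Fin M → Bool := fun i => !(p i)

/-!
STATEMENT 3: the number of classes of patterns.

Let `M = 2^m` with `m ≥ 2`.  Patterns are binary vectors of length `M` with
Hamming weight `M/2`.  Grouping patterns into the classes
`{p, inv p, refl p, inv (refl p)}`, the number `Q` of distinct classes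
satisfies `4 Q = C(M, M/2) + C(M/2, M/4) + 2^(M/2)`, i.e.,
`Q = (1/4)(C(M, M/2) + C(M/2, M/4) + 2^(M/2))`.
-/
open Finset

def wt {n : ℕ} (p : Fin n → Bool) : ℕ := (univ.filter (fun i => p i = true)).card

lemma pinv_pinv (n : ℕ) (p : Fin n → Bool) : pinv n (pinv n p) = p := by
  funext i; simp [pinv]

lemma prefl_prefl (n : ℕ) (p : Fin n → Bool) : prefl n (prefl n p) = p := by
  funext i; simp [prefl, Fin.rev_rev]

lemma prefl_pinv (n : ℕ) (p : Fin n → Bool) : prefl n (pinv n p) = pinv n (prefl n p) := rfl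

lemma wt_pinv (n : ℕ) (p : Fin n → Bool) : wt (pinv n p) = n - wt p := by
  have h : (univ.filter (fun i => pinv n p i = true)) =
      (univ.filter (fun i => p i = true))ᶜ := by
    ext i; simp [pinv]
  rw [wt, h, Finset.card_compl, Fintype.card_fin, wt]

lemma wt_prefl (n : ℕ) (p : Fin n → Bool) : wt (prefl n p) = wt p := by
  unfold wt
  apply Finset.card_bij' (fun i _ => Fin.rev i) (fun i _ => Fin.rev i)
  · intro i hi; simp only [mem_filter, mem_univ, true_and] at hi ⊢; simpa [prefl] using hi
  · intro i hi
    simp only [mem_filter, mem_univ, true_and] at hi ⊢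
    simpa [prefl, Fin.rev_rev] using hi
  · intro i _; exact Fin.rev_rev i
  · intro i _; exact Fin.rev_rev i


lemma rev_natAdd (N : ℕ) (i : Fin N) : (Fin.natAdd N i).rev = Fin.castAdd N i.rev := by
  apply Fin.ext
  simp only [Fin.val_rev, Fin.coe_castAdd, Fin.coe_natAdd]
  omega

lemma wt_split (N : ℕ) (p : Fin (N + N) → Bool) :
    wt p = (∑ i : Fin N, if p (Fin.castAdd N i) then 1 else 0)
         + (∑ i : Fin N, if p (Fin.natAdd N i) then 1 else 0) := by
  rw [wt, Finset.card_filter, Fin.sum_univ_add]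

lemma wt_palin (N : ℕ) (p : Fin (N + N) → Bool) (h : prefl (N+N) p = p) :
    wt p = 2 * wt (fun i : Fin N => p (Fin.castAdd N i)) := by
  have hrev : ∀ j : Fin (N+N), p j.rev = p j := fun j => congrFun h j
  rw [wt_split]
  have h2 : (∑ i : Fin N, if p (Fin.natAdd N i) then 1 else 0)
      = ∑ i : Fin N, if p (Fin.castAdd N i) then 1 else 0 := by
    calc (∑ i : Fin N, if p (Fin.natAdd N i) then 1 else 0)
        = ∑ i : Fin N, if p (Fin.castAdd N i.rev) then 1 else 0 := by
          refine Finset.sum_congr rfl fun i _ => ?_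
          rw [← rev_natAdd, hrev]
      _ = ∑ i : Fin N, if p (Fin.castAdd N i) then 1 else 0 :=
          Equiv.sum_comp (Fin.revPerm) (fun i => if p (Fin.castAdd N i) then 1 else 0)
  rw [h2, wt, Finset.card_filter]
  simp only [two_mul]
lemma wt_antipalin (N : ℕ) (p : Fin (N + N) → Bool) (h : pinv (N+N) (prefl (N+N) p) = p) :
    wt p = N := by
  have hrev : ∀ j : Fin (N+N), (!p j.rev) = p j := fun j => congrFun h j
  rw [wt_split]
  have h2 : (∑ i : Fin N, if p (Fin.natAdd N i) then 1 else 0)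
      = ∑ i : Fin N, if !(p (Fin.castAdd N i)) then 1 else 0 := by
    calc (∑ i : Fin N, if p (Fin.natAdd N i) then 1 else 0)
        = ∑ i : Fin N, if !(p (Fin.castAdd N i.rev)) then 1 else 0 := by
          refine Finset.sum_congr rfl fun i _ => ?_
          rw [← hrev (Fin.natAdd N i), rev_natAdd]
      _ = _  := Equiv.sum_comp (Fin.revPerm) (fun i => if !(p (Fin.castAdd N i)) then 1 else 0)
  rw [h2, ← Finset.sum_add_distrib]
  have : ∀ i : Fin N, ((if p (Fin.castAdd N i) then 1 else 0)
      + if !(p (Fin.castAdd N i)) then 1 else 0) = 1 := by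
    intro i; cases p (Fin.castAdd N i) <;> simp
  rw [Finset.sum_congr rfl (fun i _ => this i)]
  simp


lemma card_wt (n k : ℕ) :
    (univ.filter (fun p : Fin n → Bool =>
      (univ.filter (fun i => p i = true)).card = k)).card = n.choose k := by
  have h : (Finset.powersetCard k (univ : Finset (Fin n))).card = n.choose k := by
    rw [Finset.card_powersetCard, Finset.card_univ, Fintype.card_fin]
  rw [← h]
  refine Finset.card_bij' (fun p _ => univ.filter (fun i => p i = true))
    (fun s _ => fun i => decide (i ∈ s)) ?_ ?_ ?_ ?_
  · intro p hp
    simp only [Finset.mem_filter, Finset.mem_univ, true_and] at hp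
    simpa [Finset.mem_powersetCard_univ] using hp
  · intro s hs
    simp only [Finset.mem_powersetCard_univ] at hs
    simp only [Finset.mem_filter, Finset.mem_univ, true_and]
    rw [← hs]
    congr 1
    ext i
    simp
  · intro p hp
    funext i
    simp
  · intro s hs
    ext i
    simp

def ext0 (N : ℕ) (q : Fin N → Bool) : Fin (N + N) → Bool :=
  fun i => if h : i.val < N then q ⟨i.val, h⟩ else q ⟨N + N - 1 - i.val, by omega⟩

def ext1 (N : ℕ) (q : Fin N → Bool) : Fin (N + N) → Bool :=
  fun i => if h : i.val < N then q ⟨i.val, h⟩ else !q ⟨N + N - 1 - i.val, by omega⟩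

lemma toHalf_ext0 (N : ℕ) (q : Fin N → Bool) :
    (fun j : Fin N => ext0 N q (Fin.castAdd N j)) = q := by
  funext j
  have h : (Fin.castAdd N j).val < N := j.isLt
  simp only [ext0, dif_pos h]
  congr 1

lemma toHalf_ext1 (N : ℕ) (q : Fin N → Bool) :
    (fun j : Fin N => ext1 N q (Fin.castAdd N j)) = q := by
  funext j
  have h : (Fin.castAdd N j).val < N := j.isLt
  simp only [ext1, dif_pos h]
  congr 1

lemma prefl_ext0 (N : ℕ) (q : Fin N → Bool) : prefl (N+N) (ext0 N q) = ext0 N q := by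
  funext i
  have hrev : (Fin.rev i).val = N + N - 1 - i.val := by
    rw [Fin.val_rev]; omega
  by_cases h : i.val < N
  · have h2 : ¬ ((Fin.rev i).val < N) := by omega
    simp only [prefl, ext0, dif_neg h2, dif_pos h]
    congr 1
    apply Fin.ext
    simp only [hrev]
    omega
  · have h2 : (Fin.rev i).val < N := by omega
    simp only [prefl, ext0, dif_pos h2, dif_neg h]
    congr 1
    apply Fin.ext
    simp only [hrev]

lemma antipalin_ext1 (N : ℕ) (q : Fin N → Bool) :
    pinv (N+N) (prefl (N+N) (ext1 N q)) = ext1 N q := by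
  funext i
  have hrev : (Fin.rev i).val = N + N - 1 - i.val := by
    rw [Fin.val_rev]; omega
  by_cases h : i.val < N
  · have h2 : ¬ ((Fin.rev i).val < N) := by omega
    simp only [pinv, prefl, ext1, dif_neg h2, dif_pos h, Bool.not_not]
    congr 1
    apply Fin.ext
    simp only [hrev]
    omega
  · have h2 : (Fin.rev i).val < N := by omega
    simp only [pinv, prefl, ext1, dif_pos h2, dif_neg h]
    congr 2
    apply Fin.ext
    simp only [hrev]

lemma ext0_toHalf (N : ℕ) (p : Fin (N+N) → Bool) (h : prefl (N+N) p = p) :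
    ext0 N (fun j : Fin N => p (Fin.castAdd N j)) = p := by
  have hrev : ∀ j : Fin (N+N), p j.rev = p j := fun j => congrFun h j
  funext i
  unfold ext0
  split
  · next hi =>
    show p (Fin.castAdd N ⟨i.val, hi⟩) = p i
    rfl
  · next hi =>
    show p (Fin.castAdd N ⟨N + N - 1 - i.val, by omega⟩) = p i
    rw [show (Fin.castAdd N ⟨N + N - 1 - i.val, by omega⟩) = Fin.rev i by
      apply Fin.ext; simp [Fin.val_rev]; omega]
    exact hrev i

lemma ext1_toHalf (N : ℕ) (p : Fin (N+N) → Bool) (h : pinv (N+N) (prefl (N+N) p) = p) :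
    ext1 N (fun j : Fin N => p (Fin.castAdd N j)) = p := by
  have hrev : ∀ j : Fin (N+N), (!p j.rev) = p j := fun j => congrFun h j
  funext i
  unfold ext1
  split
  · next hi =>
    show p (Fin.castAdd N ⟨i.val, hi⟩) = p i
    rfl
  · next hi =>
    show (!p (Fin.castAdd N ⟨N + N - 1 - i.val, by omega⟩)) = p i
    rw [show (Fin.castAdd N ⟨N + N - 1 - i.val, by omega⟩) = Fin.rev i by
      apply Fin.ext; simp [Fin.val_rev]; omega]
    exact hrev i

lemma count_palin (N K : ℕ) (hK : N = 2 * K) :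
    (univ.filter (fun p : Fin (N+N) → Bool => wt p = N ∧ prefl (N+N) p = p)).card
      = N.choose K := by
  have h : (univ.filter (fun q : Fin N → Bool =>
      (univ.filter (fun i => q i = true)).card = K)).card = N.choose K := by
    exact card_wt N K
  rw [← h]
  refine Finset.card_bij' (fun p _ => fun j : Fin N => p (Fin.castAdd N j))
    (fun q _ => ext0 N q) ?_ ?_ ?_ ?_
  · intro p hp
    simp only [mem_filter, mem_univ, true_and] at hp ⊢
    have h1 := wt_palin N p hp.2
    rw [hp.1] at h1
    exact (Nat.eq_of_mul_eq_mul_left (by norm_num) (hK.symm.trans h1)).symm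
  · intro q hq
    simp only [mem_filter, mem_univ, true_and] at hq ⊢
    refine ⟨?_, prefl_ext0 N q⟩
    rw [wt_palin N _ (prefl_ext0 N q), toHalf_ext0]
    change 2 * wt q = N
    rw [show wt q = K from hq]
    exact hK.symm
  · intro p hp
    simp only [mem_filter, mem_univ, true_and] at hp
    exact ext0_toHalf N p hp.2
  · intro q _
    exact toHalf_ext0 N q

lemma count_antipalin (N : ℕ) :
    (univ.filter (fun p : Fin (N+N) → Bool =>
      wt p = N ∧ pinv (N+N) (prefl (N+N) p) = p)).card = 2 ^ N := by
  have h : (univ : Finset (Fin N → Bool)).card = 2 ^ N := by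
    simp [Finset.card_univ]
  rw [← h]
  refine Finset.card_bij' (fun p _ => fun j : Fin N => p (Fin.castAdd N j))
    (fun q _ => ext1 N q) ?_ ?_ ?_ ?_
  · intro p _; exact mem_univ _
  · intro q _
    simp only [mem_filter, mem_univ, true_and]
    exact ⟨wt_antipalin N _ (antipalin_ext1 N q), antipalin_ext1 N q⟩
  · intro p hp
    simp only [mem_filter, mem_univ, true_and] at hp
    exact ext1_toHalf N p hp.2
  · intro q _
    exact toHalf_ext1 N q

def orb (n : ℕ) (p : Fin n → Bool) : Finset (Fin n → Bool) :=
  {p, pinv n p, prefl n p, pinv n (prefl n p)}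

lemma mem_orb_self (n : ℕ) (p : Fin n → Bool) : p ∈ orb n p := by simp [orb]

lemma pinv_ne (n : ℕ) (hn : 0 < n) (p : Fin n → Bool) : pinv n p ≠ p := by
  intro h
  have := congrFun h ⟨0, hn⟩
  simp [pinv] at this

lemma orb_pinv (n : ℕ) (p : Fin n → Bool) : orb n (pinv n p) = orb n p := by
  ext x
  simp only [orb, mem_insert, mem_singleton, prefl_pinv, pinv_pinv]
  tauto

lemma orb_prefl (n : ℕ) (p : Fin n → Bool) : orb n (prefl n p) = orb n p := by
  ext x
  simp only [orb, mem_insert, mem_singleton, prefl_pinv, pinv_pinv, prefl_prefl]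
  tauto

lemma orb_eq_of_mem (n : ℕ) (p q : Fin n → Bool) (h : q ∈ orb n p) :
    orb n q = orb n p := by
  simp only [orb, mem_insert, mem_singleton] at h
  rcases h with rfl | rfl | rfl | rfl
  · rfl
  · exact orb_pinv n p
  · exact orb_prefl n p
  · rw [orb_pinv, orb_prefl]

lemma pinv_inj (n : ℕ) {p q : Fin n → Bool} (h : pinv n p = pinv n q) : p = q := by
  rw [← pinv_pinv n p, h, pinv_pinv]

lemma orb_card_key (n : ℕ) (hn : 0 < n) (p : Fin n → Bool) :
    (orb n p).card
      + ((orb n p).filter (fun q => prefl n q = q)).card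
      + ((orb n p).filter (fun q => pinv n (prefl n q) = q)).card = 4 := by
  have hne : ∀ q : Fin n → Bool, pinv n q ≠ q := pinv_ne n hn
  by_cases h1 : prefl n p = p
  · -- palindromic: orbit {p, pinv p}
    have h2 : pinv n (prefl n p) ≠ p := by rw [h1]; exact hne p
    have horb : orb n p = {p, pinv n p} := by
      ext x
      simp only [orb, mem_insert, mem_singleton, h1]
      tauto
    have hcard : ({p, pinv n p} : Finset (Fin n → Bool)).card = 2 := by
      rw [Finset.card_insert_of_notMem (by simp [(hne p).symm, Ne, eq_comm]),
        Finset.card_singleton]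
    have hf1 : ({p, pinv n p} : Finset (Fin n → Bool)).filter
        (fun q => prefl n q = q) = {p, pinv n p} := by
      apply Finset.filter_eq_self.mpr
      intro x hx
      simp only [mem_insert, mem_singleton] at hx
      rcases hx with rfl | rfl
      · exact h1
      · rw [prefl_pinv, h1]
    have hf2 : ({p, pinv n p} : Finset (Fin n → Bool)).filter
        (fun q => pinv n (prefl n q) = q) = ∅ := by
      apply Finset.filter_eq_empty_iff.mpr
      intro x hx
      simp only [mem_insert, mem_singleton] at hx
      rcases hx with rfl | rfl
      · exact h2
      · rw [prefl_pinv, pinv_pinv, h1]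
        intro hc
        exact hne p hc.symm
    rw [horb, hf1, hf2, hcard]
    simp
  · by_cases h2 : pinv n (prefl n p) = p
    · -- antipalindromic: prefl p = pinv p, orbit {p, pinv p}
      have h3 : prefl n p = pinv n p := by
        rw [← pinv_pinv n (prefl n p), h2]
      have horb : orb n p = {p, pinv n p} := by
        ext x
        simp only [orb, mem_insert, mem_singleton, h2, h3, pinv_pinv]
        tauto
      have hcard : ({p, pinv n p} : Finset (Fin n → Bool)).card = 2 := by
        rw [Finset.card_insert_of_notMem (by simp [(hne p).symm, Ne, eq_comm]),
          Finset.card_singleton]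
      have hf1 : ({p, pinv n p} : Finset (Fin n → Bool)).filter
          (fun q => prefl n q = q) = ∅ := by
        apply Finset.filter_eq_empty_iff.mpr
        intro x hx
        simp only [mem_insert, mem_singleton] at hx
        rcases hx with rfl | rfl
        · exact h1
        · rw [prefl_pinv, h3]
          intro hc
          exact hne p (pinv_inj n hc)
      have hf2 : ({p, pinv n p} : Finset (Fin n → Bool)).filter
          (fun q => pinv n (prefl n q) = q) = {p, pinv n p} := by
        apply Finset.filter_eq_self.mpr
        intro x hx
        simp only [mem_insert, mem_singleton] at hx
        rcases hx with rfl | rfl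
        · exact h2
        · rw [prefl_pinv, pinv_pinv, h3]
      rw [horb, hf1, hf2, hcard]
      simp
    · -- free orbit of size 4
      have d12 : p ≠ pinv n p := fun h => hne p h.symm
      have d13 : p ≠ prefl n p := fun h => h1 h.symm
      have d14 : p ≠ pinv n (prefl n p) := fun h => h2 h.symm
      have d23 : pinv n p ≠ prefl n p := by
        intro h
        exact h2 (by rw [← h, pinv_pinv])
      have d24 : pinv n p ≠ pinv n (prefl n p) := by
        intro h
        exact h1 (pinv_inj n h).symm
      have d34 : prefl n p ≠ pinv n (prefl n p) := fun h => hne _ h.symm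
      have hcard : (orb n p).card = 4 := by
        rw [orb, Finset.card_insert_of_notMem (by simp [d12, d13, d14]),
          Finset.card_insert_of_notMem (by simp [d23, d24]),
          Finset.card_insert_of_notMem (by simp [d34]),
          Finset.card_singleton]
      have hf1 : (orb n p).filter (fun q => prefl n q = q) = ∅ := by
        apply Finset.filter_eq_empty_iff.mpr
        intro x hx
        simp only [orb, mem_insert, mem_singleton] at hx
        rcases hx with rfl | rfl | rfl | rfl
        · exact h1
        · rw [prefl_pinv]
          intro hc
          exact h1 (pinv_inj n hc)
        · rw [prefl_prefl]
          intro hc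
          exact h1 hc.symm
        · rw [prefl_pinv, prefl_prefl]
          intro hc
          exact h1 (pinv_inj n hc).symm
      have hf2 : (orb n p).filter (fun q => pinv n (prefl n q) = q) = ∅ := by
        apply Finset.filter_eq_empty_iff.mpr
        intro x hx
        simp only [orb, mem_insert, mem_singleton] at hx
        rcases hx with rfl | rfl | rfl | rfl
        · exact h2
        · rw [prefl_pinv, pinv_pinv]
          exact fun hc => d23 hc.symm
        · rw [prefl_prefl]
          exact d23
        · rw [prefl_pinv, pinv_pinv, prefl_prefl]
          exact d14
      rw [hcard, hf1, hf2]
      simp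

lemma main_count (N K : ℕ) (hK : N = 2 * K) (hKpos : 0 < K) :
    4 * ((univ.filter (fun p : Fin (N + N) → Bool =>
          (univ.filter (fun i => p i = true)).card = N)).image (orb (N + N))).card
      = (N + N).choose N + N.choose K + 2 ^ N := by
  have hn : 0 < N + N := by omega
  set S : Finset (Fin (N + N) → Bool) := univ.filter (fun p : Fin (N + N) → Bool =>
    (univ.filter (fun i => p i = true)).card = N) with hSdef
  set T := S.image (orb (N + N)) with hTdef
  have hSmem : ∀ p : Fin (N + N) → Bool, p ∈ S ↔ wt p = N := by
    intro p
    rw [hSdef, mem_filter]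
    exact ⟨fun h => h.2, fun h => ⟨mem_univ p, h⟩⟩
  have horbsub : ∀ p ∈ S, ∀ q ∈ orb (N + N) p, q ∈ S := by
    intro p hp q hq
    rw [hSmem] at hp ⊢
    simp only [orb, mem_insert, mem_singleton] at hq
    rcases hq with rfl | rfl | rfl | rfl
    · exact hp
    · rw [wt_pinv, hp]; omega
    · rw [wt_prefl, hp]
    · rw [wt_pinv, wt_prefl, hp]; omega
  have fiber : ∀ p ∈ S, S.filter (fun q => orb (N + N) q = orb (N + N) p)
      = orb (N + N) p := by
    intro p hp
    ext q
    rw [mem_filter]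
    constructor
    · rintro ⟨hqS, he⟩
      rw [← he]
      exact mem_orb_self _ q
    · intro hq
      exact ⟨horbsub p hp q hq, orb_eq_of_mem _ _ _ hq⟩
  have key : ∀ (P : (Fin (N + N) → Bool) → Prop) (instP : DecidablePred P),
      (S.filter P).card = ∑ t ∈ T, (t.filter P).card := by
    intro P instP
    rw [Finset.card_eq_sum_card_fiberwise
      (f := orb (N + N)) (t := T)
      (fun x hx => Finset.mem_image_of_mem _ (Finset.mem_of_mem_filter x hx))]
    refine Finset.sum_congr rfl fun t ht => ?_
    obtain ⟨p, hp, rfl⟩ := Finset.mem_image.mp ht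
    rw [Finset.filter_comm, fiber p hp]
  have hS : S.card = ∑ t ∈ T, t.card := by
    rw [Finset.card_eq_sum_card_fiberwise
      (f := orb (N + N)) (t := T) (fun x hx => Finset.mem_image_of_mem _ hx)]
    refine Finset.sum_congr rfl fun t ht => ?_
    obtain ⟨p, hp, rfl⟩ := Finset.mem_image.mp ht
    rw [fiber p hp]
  calc 4 * T.card = ∑ _t ∈ T, 4 := by rw [Finset.sum_const, smul_eq_mul, mul_comm]
    _ = ∑ t ∈ T, (t.card + (t.filter (fun q => prefl (N + N) q = q)).card
          + (t.filter (fun q => pinv (N + N) (prefl (N + N) q) = q)).card) := by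
        refine Finset.sum_congr rfl fun t ht => ?_
        obtain ⟨p, hp, rfl⟩ := Finset.mem_image.mp ht
        exact (orb_card_key (N + N) hn p).symm
    _ = (∑ t ∈ T, t.card) + (∑ t ∈ T, (t.filter (fun q => prefl (N + N) q = q)).card)
          + (∑ t ∈ T, (t.filter (fun q => pinv (N + N) (prefl (N + N) q) = q)).card) := by
        rw [Finset.sum_add_distrib, Finset.sum_add_distrib]
    _ = S.card + (S.filter (fun q => prefl (N + N) q = q)).card
          + (S.filter (fun q => pinv (N + N) (prefl (N + N) q) = q)).card := by
        rw [hS, key _ _, key _ _]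
    _ = (N + N).choose N + N.choose K + 2 ^ N := by
        congr 1
        · congr 1
          · rw [hSdef]
            exact card_wt (N + N) N
          · rw [hSdef, Finset.filter_filter]
            exact count_palin N K hK
        · rw [hSdef, Finset.filter_filter]
          exact count_antipalin N
theorem number_of_pattern_classes (m M : ℕ) (hm : 2 ≤ m) (hM : M = 2 ^ m) :
    4 * ((Finset.univ.filter
            (fun p : Fin M → Bool =>
              (Finset.univ.filter (fun i => p i = true)).card = M / 2)).image
          (fun p => ({p, pinv M p, prefl M p, pinv M (prefl M p)} :
            Finset (Fin M → Bool)))).card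
      = Nat.choose M (M / 2) + Nat.choose (M / 2) (M / 4) + 2 ^ (M / 2) := by
  obtain ⟨k, rfl⟩ : ∃ k, m = k + 2 := ⟨m - 2, by omega⟩
  subst hM
  have hM4 : (2:ℕ) ^ (k + 2) = (2 * 2 ^ k) + (2 * 2 ^ k) := by ring
  rw [hM4]
  have hd2 : ((2 * 2 ^ k) + (2 * 2 ^ k)) / 2 = 2 * 2 ^ k := by omega
  have hd4 : ((2 * 2 ^ k) + (2 * 2 ^ k)) / 4 = 2 ^ k := by
    have : (0:ℕ) < 2 ^ k := Nat.pow_pos (by norm_num)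
    omega
  rw [hd2, hd4]
  exact main_count (2 * 2 ^ k) (2 ^ k) rfl (Nat.pow_pos (by norm_num))
end

section
/- Let M = 2^m, let d = √(3/(M²−1)), and let s_i = −d(M−2i+1) for i = 1,...,M be the equally spaced M-PAM constellation of unit average energy. Let ρ > 0 and let p ∈ {0,1}^M be a pattern of Hamming weight M/2. With midpoint thresholds β_k = (s_k + s_{k+1})/2 (and β_0 = −∞, β_M = +∞) and the threshold demodulator that outputs p_k when the observation lies in (β_{k−1}, β_k], the pattern bit-error rate P = (1/M) ∑_{i=1}^{M} Pr{output bit ≠ p_i | transmitted point is s_i} (with additive zero-mean Gaussian noise of variance 1/(2ρ)) equals P = (1/M) ∑_{n=1}^{M−1} a_n · Q((2n−1)·d·√(2ρ)), where a_n = ∑_{k=n}^{M−1} [ (p_{k+1} − p_k)(1 − 2 p_{k+1−n}) − (p_{k+2−n} − p_{k+1−n})(1 − 2 p_{k+1}) ], with bits treated as integers. -/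
open MeasureTheory

section Analytic

open Set Real

lemma pbm_integral_comp_add_right_Ioi (f : ℝ → ℝ) (a c : ℝ) :
    ∫ x in Ioi a, f (x + c) = ∫ x in Ioi (a + c), f x := by
  have h := (Homeomorph.addRight c).measurableEmbedding.setIntegral_map (μ := volume)
    (g := f) (s := Ioi (a + c))
  simp only [Homeomorph.coe_addRight, map_add_right_eq_self volume c] at h
  rw [h]
  congr 1
  ext x
  simp

lemma pbm_gauss_integrable (ρ μ : ℝ) (hρ : 0 < ρ) : Integrable (gaussDens ρ μ) := by
  unfold gaussDens
  refine Integrable.const_mul ?_ _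
  have h := (integrable_exp_neg_mul_sq hρ).comp_sub_right μ
  simpa using h

lemma pbm_gauss_total (ρ μ : ℝ) (hρ : 0 < ρ) : ∫ y, gaussDens ρ μ y = 1 := by
  unfold gaussDens
  rw [integral_const_mul]
  have h1 : ∫ y : ℝ, rexp (-ρ * (y - μ) ^ 2) = ∫ y : ℝ, rexp (-ρ * y ^ 2) :=
    integral_sub_right_eq_self (fun y => rexp (-ρ * y ^ 2)) μ
  rw [h1, integral_gaussian, ← Real.sqrt_mul (by positivity)]
  rw [show ρ / π * (π / ρ) = 1 by field_simp]
  exact Real.sqrt_one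

lemma pbm_gauss_Ioi (ρ μ a : ℝ) (hρ : 0 < ρ) :
    ∫ y in Ioi a, gaussDens ρ μ y = Qfun ((a - μ) * Real.sqrt (2 * ρ)) := by
  unfold gaussDens Qfun
  have h2ρ : (0:ℝ) < 2 * ρ := by linarith
  have hc : 0 < Real.sqrt (2 * ρ) := Real.sqrt_pos.2 h2ρ
  have step1 : ∫ y in Ioi a, Real.sqrt (ρ / π) * rexp (-ρ * (y - μ) ^ 2)
      = ∫ x in Ioi (a - μ), Real.sqrt (ρ / π) * rexp (-ρ * x ^ 2) := by
    have := pbm_integral_comp_add_right_Ioi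
      (fun x => Real.sqrt (ρ / π) * rexp (-ρ * x ^ 2)) a (-μ)
    simp only [← sub_eq_add_neg] at this
    exact this
  rw [step1]
  have key : ∀ x : ℝ, Real.sqrt (ρ / π) * rexp (-ρ * x ^ 2)
      = Real.sqrt (2 * ρ) *
          ((Real.sqrt (2 * π))⁻¹ * rexp (-(x * Real.sqrt (2 * ρ)) ^ 2 / 2)) := by
    intro x
    rw [mul_pow, Real.sq_sqrt h2ρ.le]
    have : -(x ^ 2 * (2 * ρ)) / 2 = -ρ * x ^ 2 := by ring
    rw [this]
    rw [← mul_assoc]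
    congr 1
    rw [← Real.sqrt_inv, ← Real.sqrt_mul h2ρ.le]
    congr 1
    have hπ : (0:ℝ) < π := Real.pi_pos
    field_simp
  simp_rw [key]
  rw [integral_const_mul, integral_comp_mul_right_Ioi
    (fun t => (Real.sqrt (2 * π))⁻¹ * rexp (-t ^ 2 / 2)) (a - μ) hc]
  simp only [smul_eq_mul, ← mul_assoc]
  rw [mul_inv_cancel₀ hc.ne', one_mul]

lemma pbm_phi_eq :
    (fun t : ℝ => (Real.sqrt (2 * π))⁻¹ * rexp (-t ^ 2 / 2)) = gaussDens (1/2) 0 := by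
  funext t
  unfold gaussDens
  rw [show (1:ℝ)/2/π = (2*π)⁻¹ by field_simp, Real.sqrt_inv]
  norm_num
  left; ring

lemma pbm_Qfun_as_gauss (x : ℝ) : Qfun x = ∫ t in Ioi x, gaussDens (1/2) 0 t := by
  unfold Qfun; rw [pbm_phi_eq]

lemma pbm_gauss_Iic (ρ μ b : ℝ) (hρ : 0 < ρ) :
    ∫ y in Iic b, gaussDens ρ μ y = 1 - Qfun ((b - μ) * Real.sqrt (2 * ρ)) := by
  have h := intervalIntegral.integral_Iic_add_Ioi (μ := volume) (f := gaussDens ρ μ) (b := b)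
    ((pbm_gauss_integrable ρ μ hρ).integrableOn) ((pbm_gauss_integrable ρ μ hρ).integrableOn)
  rw [pbm_gauss_total ρ μ hρ, pbm_gauss_Ioi ρ μ b hρ] at h
  linarith

lemma pbm_gauss_Ioc (ρ μ a b : ℝ) (hρ : 0 < ρ) (hab : a ≤ b) :
    ∫ y in Ioc a b, gaussDens ρ μ y
      = Qfun ((a - μ) * Real.sqrt (2 * ρ)) - Qfun ((b - μ) * Real.sqrt (2 * ρ)) := by
  have hu : Ioc a b ∪ Ioi b = Ioi a := Ioc_union_Ioi_eq_Ioi hab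
  have h := setIntegral_union (f := gaussDens ρ μ) (μ := volume) (s := Ioc a b) (t := Ioi b)
    (Ioc_disjoint_Ioi le_rfl) measurableSet_Ioi
    ((pbm_gauss_integrable ρ μ hρ).integrableOn) ((pbm_gauss_integrable ρ μ hρ).integrableOn)
  rw [hu, pbm_gauss_Ioi ρ μ a hρ, pbm_gauss_Ioi ρ μ b hρ] at h
  linarith

lemma pbm_Qfun_neg (x : ℝ) : Qfun (-x) = 1 - Qfun x := by
  have h2 : (0:ℝ) < 1/2 := by norm_num
  rw [pbm_Qfun_as_gauss]
  have : ∫ t in Ioi (-x), gaussDens (1/2) 0 t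
      = ∫ t in Ioi (-x), gaussDens (1/2) 0 (-t) := by
    refine setIntegral_congr_fun measurableSet_Ioi (fun t _ => ?_)
    unfold gaussDens; ring_nf
  rw [this, integral_comp_neg_Ioi, neg_neg]
  have h := pbm_gauss_Iic (1/2) 0 x h2
  rw [h]
  congr 1
  rw [show (2:ℝ) * (1/2) = 1 by norm_num, Real.sqrt_one, sub_zero, mul_one]

end Analytic

section Combinatorial

open Finset

lemma pbm_tele (g : ℕ → ℝ) (n : ℕ) :
    ∑ k ∈ Icc 1 n, (g k - g (k+1)) = g 1 - g (n+1) := by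
  induction n with
  | zero => simp
  | succ j ih => rw [sum_Icc_succ_top (by omega), ih]; ring

lemma pbm_abel (M : ℕ) (hM : 1 ≤ M) (e F : ℕ → ℝ) :
    ∑ k ∈ Icc 1 M, e k * (F k - F (k-1))
      = e M * F M - e 1 * F 0 + ∑ k ∈ Icc 1 (M-1), (e k - e (k+1)) * F k := by
  induction M with
  | zero => omega
  | succ j ih =>
      rcases Nat.eq_or_lt_of_le hM with h1 | h2
      · simp [← h1]; ring
      · have hj : 1 ≤ j := by omega
        rw [sum_Icc_succ_top (by omega), ih hj]
        have : j + 1 - 1 = j := by omega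
        rw [this]
        rw [show Icc 1 j = Icc 1 (j-1+1) by congr 1; omega]
        rw [sum_Icc_succ_top (by omega)]
        have h3 : j - 1 + 1 = j := by omega
        rw [h3]
        ring

lemma pbm_Vlem (b : ℕ → ℝ) (hb : ∀ i, b i * b i = b i) (j : ℕ) :
    ∑ k ∈ Icc 1 j, (b (k+1) - b k) * (2 * (∑ i ∈ Icc 1 k, b i) - (k:ℝ))
      = b (j+1) * (2 * (∑ i ∈ Icc 1 j, b i) - (j:ℝ)) - ∑ i ∈ Icc 1 j, b i := by
  induction j with
  | zero => simp
  | succ j ih =>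
      rw [sum_Icc_succ_top (by omega), ih, sum_Icc_succ_top (f := b) (by omega : 1 ≤ j + 1)]
      push_cast
      linear_combination (-2 : ℝ) * hb (j+1)

lemma pbm_reindexA (b : ℕ → ℝ) (q : ℝ → ℝ) (k : ℕ) :
    ∑ i ∈ Icc 1 k, (1 - 2*b i) * q (2*(k:ℝ) - 2*(i:ℝ) + 1)
      = ∑ n ∈ Icc 1 k, (1 - 2*b (k+1-n)) * q (2*(n:ℝ) - 1) := by
  refine sum_nbij' (fun i => k+1-i) (fun n => k+1-n) ?_ ?_ ?_ ?_ ?_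
  · intro a ha; simp only [mem_Icc] at *; omega
  · intro a ha; simp only [mem_Icc] at *; omega
  · intro a ha; simp only [mem_Icc] at *; omega
  · intro a ha; simp only [mem_Icc] at *; omega
  · intro i hi
    simp only [mem_Icc] at hi
    have e1 : k + 1 - (k+1-i) = i := by omega
    rw [e1]
    have e2 : ((k+1-i : ℕ) : ℝ) = (k:ℝ) + 1 - (i:ℝ) := by
      have : i ≤ k + 1 := by omega
      push_cast [this]; ring
    rw [e2]
    ring_nf

lemma pbm_splitReflect (b : ℕ → ℝ) (q : ℝ → ℝ) (hq : ∀ x, q (-x) = 1 - q x)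
    (M k : ℕ) (hk : k ≤ M) :
    ∑ i ∈ Icc 1 M, (1 - 2*b i) * q (2*(k:ℝ) - 2*(i:ℝ) + 1)
      = (∑ i ∈ Icc 1 k, (1 - 2*b i) * q (2*(k:ℝ) - 2*(i:ℝ) + 1))
        + ((∑ n ∈ Icc 1 (M-k), (1 - 2*b (k+n)))
            - ∑ n ∈ Icc 1 (M-k), (1 - 2*b (k+n)) * q (2*(n:ℝ) - 1)) := by
  have hsplit : ∑ i ∈ Icc 1 M, (1 - 2*b i) * q (2*(k:ℝ) - 2*(i:ℝ) + 1)
      = (∑ i ∈ Icc 1 k, (1 - 2*b i) * q (2*(k:ℝ) - 2*(i:ℝ) + 1))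
        + ∑ i ∈ Ioc k M, (1 - 2*b i) * q (2*(k:ℝ) - 2*(i:ℝ) + 1) := by
    rw [show Icc 1 M = Ioc 0 M from Finset.Icc_add_one_left_eq_Ioc 0 M,
        show Icc 1 k = Ioc 0 k from Finset.Icc_add_one_left_eq_Ioc 0 k]
    exact (sum_Ioc_consecutive _ (Nat.zero_le k) hk).symm
  rw [hsplit]
  congr 1
  have hre : ∑ i ∈ Ioc k M, (1 - 2*b i) * q (2*(k:ℝ) - 2*(i:ℝ) + 1)
      = ∑ n ∈ Icc 1 (M-k), (1 - 2*b (k+n)) * (1 - q (2*(n:ℝ) - 1)) := by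
    refine sum_nbij' (fun i => i - k) (fun n => k + n) ?_ ?_ ?_ ?_ ?_
    · intro a ha; simp only [mem_Ioc, mem_Icc] at *; omega
    · intro a ha; simp only [mem_Ioc, mem_Icc] at *; omega
    · intro a ha; simp only [mem_Ioc, mem_Icc] at *; omega
    · intro a ha; simp only [mem_Ioc, mem_Icc] at *; omega
    · intro i hi
      simp only [mem_Ioc] at hi
      have e1 : k + (i - k) = i := by omega
      rw [e1]
      have e2 : ((i - k : ℕ) : ℝ) = (i:ℝ) - (k:ℝ) := by
        have : k ≤ i := by omega
        push_cast [this]; ring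
      rw [e2]
      have e3 : 2*(k:ℝ) - 2*(i:ℝ) + 1 = -(2*((i:ℝ) - (k:ℝ)) - 1) := by ring
      rw [e3, hq]
  rw [hre, ← sum_sub_distrib]
  congr 1; funext n; ring

lemma pbm_Bval (b : ℕ → ℝ) (M k : ℕ) (hk : k ≤ M) :
    ∑ n ∈ Icc 1 (M-k), (1 - 2*b (k+n))
      = ((M:ℝ) - 2 * ∑ i ∈ Icc 1 M, b i) - ((k:ℝ) - 2 * ∑ i ∈ Icc 1 k, b i) := by
  have hre : ∑ n ∈ Icc 1 (M-k), (1 - 2*b (k+n)) = ∑ i ∈ Ioc k M, (1 - 2*b i) := by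
    refine sum_nbij' (fun n => k + n) (fun i => i - k) ?_ ?_ ?_ ?_ ?_
    · intro a ha; simp only [mem_Ioc, mem_Icc] at *; omega
    · intro a ha; simp only [mem_Ioc, mem_Icc] at *; omega
    · intro a ha; simp only [mem_Ioc, mem_Icc] at *; omega
    · intro a ha; simp only [mem_Ioc, mem_Icc] at *; omega
    · intro n _; rfl
  rw [hre]
  have h1 : ∀ j : ℕ, ∑ i ∈ Icc 1 j, (1 - 2*b i) = (j:ℝ) - 2 * ∑ i ∈ Icc 1 j, b i := by
    intro j
    rw [sum_sub_distrib, sum_const, Nat.card_Icc]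
    simp [mul_sum]
  have hsplit : ∑ i ∈ Icc 1 k, (1 - 2*b i) + ∑ i ∈ Ioc k M, (1 - 2*b i)
      = ∑ i ∈ Icc 1 M, (1 - 2*b i) := by
    rw [show Icc 1 M = Ioc 0 M from Finset.Icc_add_one_left_eq_Ioc 0 M,
        show Icc 1 k = Ioc 0 k from Finset.Icc_add_one_left_eq_Ioc 0 k]
    exact sum_Ioc_consecutive _ (Nat.zero_le k) hk
  rw [h1, h1] at hsplit
  linarith

lemma pbm_swapA (M : ℕ) (f : ℕ → ℕ → ℝ) :
    ∑ k ∈ Icc 1 (M-1), ∑ n ∈ Icc 1 k, f k n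
      = ∑ n ∈ Icc 1 (M-1), ∑ k ∈ Icc n (M-1), f k n := by
  have step1 : ∀ k ∈ Icc 1 (M-1), ∑ n ∈ Icc 1 k, f k n
      = ∑ n ∈ Icc 1 (M-1), if n ≤ k then f k n else 0 := by
    intro k hk
    simp only [mem_Icc] at hk
    rw [← sum_filter]
    congr 1
    ext n
    simp only [mem_filter, mem_Icc]
    omega
  rw [sum_congr rfl step1, sum_comm]
  refine sum_congr rfl ?_
  intro n hn
  simp only [mem_Icc] at hn
  rw [← sum_filter]
  congr 1
  ext k
  simp only [mem_filter, mem_Icc]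
  omega

lemma pbm_swapC (M : ℕ) (g : ℕ → ℕ → ℝ) :
    ∑ k ∈ Icc 1 (M-1), ∑ n ∈ Icc 1 (M-k), g k n
      = ∑ n ∈ Icc 1 (M-1), ∑ k ∈ Icc n (M-1), g (k+1-n) n := by
  have step1 : ∀ k ∈ Icc 1 (M-1), ∑ n ∈ Icc 1 (M-k), g k n
      = ∑ n ∈ Icc 1 (M-1), if k ≤ M - n then g k n else 0 := by
    intro k hk
    simp only [mem_Icc] at hk
    rw [← sum_filter]
    congr 1
    ext n
    simp only [mem_filter, mem_Icc]
    omega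
  rw [sum_congr rfl step1, sum_comm]
  refine sum_congr rfl ?_
  intro n hn
  simp only [mem_Icc] at hn
  rw [← sum_filter]
  have hfil : filter (fun k => k ≤ M - n) (Icc 1 (M-1)) = Icc 1 (M-n) := by
    ext k
    simp only [mem_filter, mem_Icc]
    omega
  rw [hfil]
  refine sum_nbij' (fun k => k + n - 1) (fun j => j + 1 - n) ?_ ?_ ?_ ?_ ?_
  · intro a ha; simp only [mem_Icc] at *; omega
  · intro a ha; simp only [mem_Icc] at *; omega
  · intro a ha; simp only [mem_Icc] at *; omega
  · intro a ha; simp only [mem_Icc] at *; omega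
  · intro k hk
    simp only [mem_Icc] at hk
    have e : k + n - 1 + 1 - n = k := by omega
    rw [e]

lemma pbm_comb (M : ℕ) (hM : 2 ≤ M) (b : ℕ → ℝ) (hb : ∀ i, b i * b i = b i)
    (hW : 2 * ∑ i ∈ Icc 1 M, b i = (M:ℝ))
    (q : ℝ → ℝ) (hq : ∀ x, q (-x) = 1 - q x) :
    ∑ i ∈ Icc 1 M, ((b 1 + b i - 2 * b 1 * b i) +
        ∑ k ∈ Icc 1 (M-1), (b (k+1) - b k) * (1 - 2 * b i) * q (2*(k:ℝ) - 2*(i:ℝ) + 1))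
      = ∑ n ∈ Icc 1 (M-1), (∑ k ∈ Icc n (M-1),
          ((b (k+1) - b k) * (1 - 2*b (k+1-n)) - (b (k+2-n) - b (k+1-n)) * (1 - 2*b (k+1))))
            * q (2*(n:ℝ) - 1) := by
  have hM1 : 1 ≤ M := by omega
  rw [sum_add_distrib]
  have hS1 : ∑ i ∈ Icc 1 M, (b 1 + b i - 2 * b 1 * b i) = ∑ i ∈ Icc 1 M, b i := by
    have h2 : ∀ i ∈ Icc 1 M, b 1 + b i - 2 * b 1 * b i
        = b 1 * (1 - 2 * b i) + b i := by intro i _; ring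
    rw [sum_congr rfl h2, sum_add_distrib, ← mul_sum, sum_sub_distrib, sum_const,
        Nat.card_Icc, ← mul_sum]
    simp only [Nat.add_sub_cancel, nsmul_eq_mul, mul_one]
    rw [hW]
    simp
  rw [hS1]
  have hS2 : ∑ i ∈ Icc 1 M, ∑ k ∈ Icc 1 (M-1),
        (b (k+1) - b k) * (1 - 2 * b i) * q (2*(k:ℝ) - 2*(i:ℝ) + 1)
      = ∑ k ∈ Icc 1 (M-1), (b (k+1) - b k) *
          ∑ i ∈ Icc 1 M, (1 - 2 * b i) * q (2*(k:ℝ) - 2*(i:ℝ) + 1) := by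
    rw [sum_comm]
    exact sum_congr rfl fun k _ => by rw [mul_sum]; exact sum_congr rfl fun i _ => by ring
  rw [hS2]
  have hinner : ∀ k ∈ Icc 1 (M-1),
      (b (k+1) - b k) * ∑ i ∈ Icc 1 M, (1 - 2 * b i) * q (2*(k:ℝ) - 2*(i:ℝ) + 1)
      = (b (k+1) - b k) * (∑ n ∈ Icc 1 k, (1 - 2*b (k+1-n)) * q (2*(n:ℝ) - 1))
        + (b (k+1) - b k) * (2 * (∑ i ∈ Icc 1 k, b i) - (k:ℝ))
        - (b (k+1) - b k) * ∑ n ∈ Icc 1 (M-k), (1 - 2*b (k+n)) * q (2*(n:ℝ) - 1) := by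
    intro k hk
    simp only [mem_Icc] at hk
    have hkM : k ≤ M := by omega
    rw [pbm_splitReflect b q hq M k hkM, pbm_reindexA b q k, pbm_Bval b M k hkM, hW]
    ring
  rw [sum_congr rfl hinner]
  have hfactA : ∀ k ∈ Icc 1 (M-1),
      (b (k+1) - b k) * (∑ n ∈ Icc 1 k, (1 - 2*b (k+1-n)) * q (2*(n:ℝ) - 1))
        + (b (k+1) - b k) * (2 * (∑ i ∈ Icc 1 k, b i) - (k:ℝ))
        - (b (k+1) - b k) * ∑ n ∈ Icc 1 (M-k), (1 - 2*b (k+n)) * q (2*(n:ℝ) - 1)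
      = (∑ n ∈ Icc 1 k, (b (k+1) - b k) * (1 - 2*b (k+1-n)) * q (2*(n:ℝ) - 1))
        + (b (k+1) - b k) * (2 * (∑ i ∈ Icc 1 k, b i) - (k:ℝ))
        - ∑ n ∈ Icc 1 (M-k), (b (k+1) - b k) * (1 - 2*b (k+n)) * q (2*(n:ℝ) - 1) := by
    intro k _
    have a1 : (b (k+1) - b k) * (∑ n ∈ Icc 1 k, (1 - 2*b (k+1-n)) * q (2*(n:ℝ) - 1))
        = ∑ n ∈ Icc 1 k, (b (k+1) - b k) * (1 - 2*b (k+1-n)) * q (2*(n:ℝ) - 1) := by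
      rw [mul_sum]; exact sum_congr rfl fun n _ => by ring
    have a2 : (b (k+1) - b k) * ∑ n ∈ Icc 1 (M-k), (1 - 2*b (k+n)) * q (2*(n:ℝ) - 1)
        = ∑ n ∈ Icc 1 (M-k), (b (k+1) - b k) * (1 - 2*b (k+n)) * q (2*(n:ℝ) - 1) := by
      rw [mul_sum]; exact sum_congr rfl fun n _ => by ring
    rw [a1, a2]
  rw [sum_congr rfl hfactA]
  have hsplit3 : ∀ x : ℕ → ℝ, ∀ y : ℕ → ℝ, ∀ z : ℕ → ℝ,
      ∑ k ∈ Icc 1 (M-1), (x k + y k - z k)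
        = (∑ k ∈ Icc 1 (M-1), x k) + (∑ k ∈ Icc 1 (M-1), y k) - ∑ k ∈ Icc 1 (M-1), z k := by
    intro x y z
    rw [← sum_add_distrib, ← sum_sub_distrib]
  rw [hsplit3]
  have hB := pbm_Vlem b hb (M-1)
  have hM1e : M - 1 + 1 = M := by omega
  rw [hM1e] at hB
  rw [hB]
  have hA := pbm_swapA M (fun k n => (b (k+1) - b k) * (1 - 2*b (k+1-n)) * q (2*(n:ℝ) - 1))
  rw [hA]
  have hC := pbm_swapC M (fun k n => (b (k+1) - b k) * (1 - 2*b (k+n)) * q (2*(n:ℝ) - 1))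
  rw [hC]
  have hCfix : ∀ n ∈ Icc 1 (M-1), ∑ k ∈ Icc n (M-1),
        (b (k+1-n+1) - b (k+1-n)) * (1 - 2*b (k+1-n+n)) * q (2*(n:ℝ) - 1)
      = ∑ k ∈ Icc n (M-1), (b (k+2-n) - b (k+1-n)) * (1 - 2*b (k+1)) * q (2*(n:ℝ) - 1) := by
    intro n hn
    simp only [mem_Icc] at hn
    refine sum_congr rfl fun k hk => ?_
    simp only [mem_Icc] at hk
    have e1 : k+1-n+1 = k+2-n := by omega
    have e2 : k+1-n+n = k+1 := by omega
    rw [e1, e2]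
  rw [sum_congr rfl hCfix]
  have hWM : ∑ i ∈ Icc 1 M, b i = (∑ i ∈ Icc 1 (M-1), b i) + b M := by
    conv_lhs => rw [← hM1e]
    rw [sum_Icc_succ_top (by omega), hM1e]
  have hcast : ((M-1 : ℕ) : ℝ) = (M:ℝ) - 1 := by
    have : (1:ℕ) ≤ M := hM1
    push_cast [this]; ring
  have hzero : ∑ i ∈ Icc 1 M, b i
      + (b M * (2 * (∑ i ∈ Icc 1 (M-1), b i) - ((M-1 : ℕ):ℝ)) - ∑ i ∈ Icc 1 (M-1), b i)
      = 0 := by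
    rw [hcast]
    linear_combination b M * hW - 2 * hb M + (1 - 2 * b M) * hWM
  have hRHS : ∀ n ∈ Icc 1 (M-1),
      (∑ k ∈ Icc n (M-1),
          ((b (k+1) - b k) * (1 - 2*b (k+1-n)) - (b (k+2-n) - b (k+1-n)) * (1 - 2*b (k+1))))
            * q (2*(n:ℝ) - 1)
      = (∑ k ∈ Icc n (M-1), (b (k+1) - b k) * (1 - 2*b (k+1-n)) * q (2*(n:ℝ) - 1))
        - ∑ k ∈ Icc n (M-1), (b (k+2-n) - b (k+1-n)) * (1 - 2*b (k+1)) * q (2*(n:ℝ) - 1) := by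
    intro n _
    rw [sum_sub_distrib, sub_mul, sum_mul, sum_mul]
  rw [sum_congr rfl hRHS, sum_sub_distrib]
  linarith [hzero]

end Combinatorial

/-!
STATEMENT 10: pattern bit-error rate for equally spaced `M`-PAM.

`M = 2^m`, `d = √(3/(M²-1))`, and `s i = -d(M - 2i + 1)` for `i = 1, …, M` is
the equally spaced `M`-PAM constellation of unit average energy.  With the
midpoint thresholds `β k = (s k + s (k+1))/2` and the threshold demodulator
that outputs the bit `p k` on the region `(β (k-1), β k]`, the pattern BER over
the AWGN channel with SNR `ρ > 0` equals
`(1/M) ∑_{n=1}^{M-1} a_n Q((2n-1) d √(2ρ))` where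
`a_n = ∑_{k=n}^{M-1} [(p_{k+1} - p_k)(1 - 2 p_{k+1-n})
                       - (p_{k+2-n} - p_{k+1-n})(1 - 2 p_{k+1})]`.
-/
theorem pattern_ber_mpam (m M : ℕ) (hm : 1 ≤ m) (hM : M = 2 ^ m)
    (d : ℝ) (hd : d = Real.sqrt (3 / ((M : ℝ) ^ 2 - 1)))
    (s : ℕ → ℝ) (hs : ∀ i ∈ Finset.Icc 1 M, s i = -d * ((M : ℝ) - 2 * i + 1))
    (ρ : ℝ) (hρ : 0 < ρ)
    (p : ℕ → Bool)
    (hp : ((Finset.Icc 1 M).filter (fun i => p i = true)).card = M / 2)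
    (β : ℕ → ℝ) (hβ : ∀ k ∈ Finset.Icc 1 (M - 1), β k = (s k + s (k + 1)) / 2) :
    (M : ℝ)⁻¹ * ∑ i ∈ Finset.Icc 1 M, ∑ k ∈ Finset.Icc 1 M,
        (if p k ≠ p i then ∫ y in region β M k, gaussDens ρ (s i) y else 0)
      = (M : ℝ)⁻¹ * ∑ n ∈ Finset.Icc 1 (M - 1),
          (∑ k ∈ Finset.Icc n (M - 1),
            ((bitR (p (k + 1)) - bitR (p k)) * (1 - 2 * bitR (p (k + 1 - n))) -
              (bitR (p (k + 2 - n)) - bitR (p (k + 1 - n))) * (1 - 2 * bitR (p (k + 1))))) *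
            Qfun ((2 * (n : ℝ) - 1) * d * Real.sqrt (2 * ρ)) := by
  have hM2 : 2 ≤ M := by
    rw [hM]
    calc 2 = 2^1 := rfl
    _ ≤ 2^m := Nat.pow_le_pow_right (by norm_num) hm
  have hMR : (2:ℝ) ≤ (M:ℝ) := by exact_mod_cast hM2
  have hdpos : 0 < d := by
    rw [hd]
    apply Real.sqrt_pos.2
    apply div_pos (by norm_num)
    nlinarith
  set b : ℕ → ℝ := fun j => bitR (p j) with hb_def
  set c : ℝ := d * Real.sqrt (2*ρ) with hc_def
  set q : ℝ → ℝ := fun x => Qfun (x * c) with hq_def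
  have hq : ∀ x, q (-x) = 1 - q x := by
    intro x
    simp only [hq_def]
    rw [neg_mul]
    exact pbm_Qfun_neg _
  have hβval : ∀ k, 1 ≤ k → k ≤ M - 1 → β k = -d * ((M:ℝ) - 2*k) := by
    intro k h1 h2
    rw [hβ k (by simp only [Finset.mem_Icc]; omega),
        hs k (by simp only [Finset.mem_Icc]; omega),
        hs (k+1) (by simp only [Finset.mem_Icc]; omega)]
    push_cast; ring
  -- the CDF-style function
  set F : ℕ → ℕ → ℝ := fun i k => if k = 0 then (0:ℝ) else if k = M then 1
      else 1 - q (2*(k:ℝ) - 2*(i:ℝ) + 1) with hF_def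
  have harg : ∀ i j : ℕ, 1 ≤ i → i ≤ M → 1 ≤ j → j ≤ M-1 →
      (β j - s i) * Real.sqrt (2*ρ) = (2*(j:ℝ) - 2*(i:ℝ) + 1) * c := by
    intro i j hi1 hi2 h1 h2
    rw [hβval j h1 h2, hs i (by simp only [Finset.mem_Icc]; omega), hc_def]
    ring
  have hint : ∀ i ∈ Finset.Icc 1 M, ∀ k ∈ Finset.Icc 1 M,
      ∫ y in region β M k, gaussDens ρ (s i) y = F i k - F i (k-1) := by
    intro i hi k hk
    simp only [Finset.mem_Icc] at hi hk
    by_cases hk1 : k = 1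
    · subst hk1
      have hreg : region β M 1 = Set.Iic (β 1) := by
        unfold region; rw [if_pos rfl]
      rw [hreg, pbm_gauss_Iic ρ (s i) (β 1) hρ,
          harg i 1 (by omega) (by omega) (by omega) (by omega)]
      simp only [hF_def, hq_def]
      norm_num
      intro h; omega
    · by_cases hkM : k = M
      · have hreg : region β M k = Set.Ioi (β (M-1)) := by
          unfold region; rw [if_neg hk1, if_pos hkM]
        rw [hreg, pbm_gauss_Ioi ρ (s i) (β (M-1)) hρ,
            harg i (M-1) (by omega) (by omega) (by omega) (by omega), hkM]
        simp only [hF_def, hq_def]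
        simp [show ¬ (M = 0) by omega, show ¬ (M - 1 = 0) by omega,
              show ¬ (M - 1 = M) by omega]
      · have hreg : region β M k = Set.Ioc (β (k-1)) (β k) := by
          unfold region; rw [if_neg hk1, if_neg hkM]
        have hord : β (k-1) ≤ β k := by
          rw [hβval (k-1) (by omega) (by omega), hβval k (by omega) (by omega)]
          have : ((k-1:ℕ):ℝ) = (k:ℝ) - 1 := by
            have : (1:ℕ) ≤ k := by omega
            push_cast [this]; ring
          rw [this]
          nlinarith
        rw [hreg, pbm_gauss_Ioc ρ (s i) (β (k-1)) (β k) hρ hord,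
            harg i (k-1) (by omega) (by omega) (by omega) (by omega),
            harg i k (by omega) (by omega) (by omega) (by omega)]
        simp only [hF_def, hq_def]
        simp [show ¬ (k = 0) by omega, hkM, show ¬ (k - 1 = 0) by omega,
              show ¬ (k - 1 = M) by omega]
  -- replace if-term by e * (F-diff)
  have hterm : ∀ i ∈ Finset.Icc 1 M, ∀ k ∈ Finset.Icc 1 M,
      (if p k ≠ p i then ∫ y in region β M k, gaussDens ρ (s i) y else 0)
        = (b k + b i - 2*b k*b i) * (F i k - F i (k-1)) := by
    intro i hi k hk
    rw [show (if p k ≠ p i then ∫ y in region β M k, gaussDens ρ (s i) y else 0)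
        = (if p k ≠ p i then (1:ℝ) else 0) * ∫ y in region β M k, gaussDens ρ (s i) y by
      split <;> simp]
    rw [hint i hi k hk]
    congr 1
    simp only [hb_def, bitR]
    cases hpk : p k <;> cases hpi : p i <;> simp [hpk, hpi] <;> norm_num
  -- per-i Abel summation
  have hAbel : ∀ i ∈ Finset.Icc 1 M,
      ∑ k ∈ Finset.Icc 1 M, (b k + b i - 2*b k*b i) * (F i k - F i (k-1))
      = (b 1 + b i - 2*b 1*b i)
        + ∑ k ∈ Finset.Icc 1 (M-1), (b (k+1) - b k) * (1 - 2*b i)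
            * q (2*(k:ℝ) - 2*(i:ℝ) + 1) := by
    intro i hi
    rw [pbm_abel M (by omega) (fun k => b k + b i - 2*b k*b i) (F i)]
    have hFM : F i M = 1 := by simp [hF_def, show M ≠ 0 by omega]
    have hF0 : F i 0 = 0 := by simp [hF_def]
    rw [hFM, hF0]
    have hsplit : ∀ k ∈ Finset.Icc 1 (M-1),
        ((b k + b i - 2*b k*b i) - (b (k+1) + b i - 2*b (k+1)*b i)) * F i k
        = ((b k + b i - 2*b k*b i) - (b (k+1) + b i - 2*b (k+1)*b i))
          + (b (k+1) - b k) * (1 - 2*b i) * q (2*(k:ℝ) - 2*(i:ℝ) + 1) := by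
      intro k hk
      simp only [Finset.mem_Icc] at hk
      have hFk : F i k = 1 - q (2*(k:ℝ) - 2*(i:ℝ) + 1) := by
        simp [hF_def, show k ≠ 0 by omega, show k ≠ M by omega]
      rw [hFk]
      ring
    rw [Finset.sum_congr rfl hsplit, Finset.sum_add_distrib,
        pbm_tele (fun k => b k + b i - 2*b k*b i) (M-1),
        show M - 1 + 1 = M by omega]
    ring
  calc (M : ℝ)⁻¹ * ∑ i ∈ Finset.Icc 1 M, ∑ k ∈ Finset.Icc 1 M,
        (if p k ≠ p i then ∫ y in region β M k, gaussDens ρ (s i) y else 0)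
      = (M : ℝ)⁻¹ * ∑ i ∈ Finset.Icc 1 M, ((b 1 + b i - 2*b 1*b i)
          + ∑ k ∈ Finset.Icc 1 (M-1), (b (k+1) - b k) * (1 - 2*b i)
              * q (2*(k:ℝ) - 2*(i:ℝ) + 1)) := by
        congr 1
        refine Finset.sum_congr rfl fun i hi => ?_
        rw [Finset.sum_congr rfl (hterm i hi), hAbel i hi]
    _ = (M : ℝ)⁻¹ * ∑ n ∈ Finset.Icc 1 (M-1), (∑ k ∈ Finset.Icc n (M-1),
          ((b (k+1) - b k) * (1 - 2*b (k+1-n)) - (b (k+2-n) - b (k+1-n)) * (1 - 2*b (k+1))))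
            * q (2*(n:ℝ) - 1) := by
        congr 1
        refine pbm_comb M hM2 b ?_ ?_ q hq
        · intro i
          simp only [hb_def, bitR]
          cases p i <;> norm_num
        · have hsum : ∑ i ∈ Finset.Icc 1 M, b i = ((M/2 : ℕ) : ℝ) := by
            simp only [hb_def, bitR]
            rw [Finset.sum_boole, hp]
          rw [hsum]
          have hMev : 2 ∣ M := by rw [hM]; exact dvd_pow_self 2 (by omega)
          have h2 : (2 * (M / 2) : ℕ) = M := by omega
          calc (2:ℝ) * ((M/2 : ℕ):ℝ) = ((2 * (M/2) : ℕ) : ℝ) := by push_cast; ring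
          _ = (M:ℝ) := by rw [h2]
    _ = (M : ℝ)⁻¹ * ∑ n ∈ Finset.Icc 1 (M - 1),
          (∑ k ∈ Finset.Icc n (M - 1),
            ((bitR (p (k + 1)) - bitR (p k)) * (1 - 2 * bitR (p (k + 1 - n))) -
              (bitR (p (k + 2 - n)) - bitR (p (k + 1 - n))) * (1 - 2 * bitR (p (k + 1))))) *
            Qfun ((2 * (n : ℝ) - 1) * d * Real.sqrt (2 * ρ)) := by
        congr 1
        refine Finset.sum_congr rfl fun n _ => ?_
        simp only [hb_def, hq_def, hc_def]
        rw [← mul_assoc]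
end

section
/- Let M be even. For a pattern p ∈ {0,1}^M of Hamming weight M/2, let T(p) = |{k ∈ {1,...,M−1} : p_k ≠ p_{k+1}}| be its number of adjacent bit transitions. Then the set of values {T(p) : p a pattern of length M with Hamming weight M/2} equals {1, 2, ..., M−1}; in particular, there are exactly M−1 distinct possible values of the leading coefficient a_1 = 2·T(p), so all pattern BER curves merge into M−1 groups at high SNR. -/
private lemma odd_count (n : ℕ) :
    ((Finset.Icc 1 n).filter (fun i => i % 2 = 1)).card = (n + 1) / 2 := by
  induction n with
  | zero => simp
  | succ n ih =>
    rw [← Finset.Ico_insert_right (show (1:ℕ) ≤ n + 1 by omega), Finset.Ico_add_one_right_eq_Icc,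
      Finset.filter_insert]
    by_cases h : (n + 1) % 2 = 1
    · rw [if_pos h, Finset.card_insert_of_notMem (by simp), ih]; omega
    · rw [if_neg h, ih]; omega

/-!
STATEMENT 12: for even `M > 0`, the set of possible numbers of adjacent bit
transitions `T(p) = |{k ∈ {1,…,M−1} : p_k ≠ p_{k+1}}|`, as `p` ranges over all
patterns of length `M` with Hamming weight `M/2`, is exactly `{1, 2, …, M−1}`.
In particular there are exactly `M−1` distinct possible values of the leading
coefficient `a_1 = 2 T(p)`, so all pattern BER curves merge into `M−1` groups
at high SNR.
-/
theorem transition_counts_range (M : ℕ) (hM : Even M) (hM0 : 0 < M) :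
    {t : ℕ | ∃ p : ℕ → Bool,
        ((Finset.Icc 1 M).filter (fun i => p i = true)).card = M / 2 ∧
        t = ((Finset.Icc 1 (M - 1)).filter (fun k => p k ≠ p (k + 1))).card}
      = Set.Icc 1 (M - 1) := by
  obtain ⟨m, hm⟩ := hM
  have hm1 : 1 ≤ m := by omega
  ext t
  simp only [Set.mem_setOf_eq, Set.mem_Icc]
  constructor
  · rintro ⟨p, hw, ht⟩
    constructor
    · -- at least one transition
      by_contra h
      have h0 : ((Finset.Icc 1 (M - 1)).filter (fun k => p k ≠ p (k + 1))).card = 0 := by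
        omega
      rw [Finset.card_eq_zero] at h0
      have hnot : ∀ k, 1 ≤ k → k ≤ M - 1 → p k = p (k + 1) := by
        intro k hk1 hk2
        by_contra hne
        have : k ∈ (Finset.Icc 1 (M - 1)).filter (fun k => p k ≠ p (k + 1)) := by
          simp [Finset.mem_Icc, hk1, hk2, hne]
        rw [h0] at this
        simp at this
      have hconst : ∀ i, 1 ≤ i → i ≤ M → p i = p 1 := by
        intro i
        induction i with
        | zero => omega
        | succ n ih =>
          intro h1 h2
          rcases Nat.eq_or_lt_of_le h1 with h | h
          · rw [← h]
          · have hn1 : 1 ≤ n := by omega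
            have := hnot n hn1 (by omega)
            rw [← this]
            exact ih hn1 (by omega)
      cases hp1 : p 1 with
      | true =>
        have : (Finset.Icc 1 M).filter (fun i => p i = true) = Finset.Icc 1 M := by
          apply Finset.filter_true_of_mem
          intro i hi
          rw [Finset.mem_Icc] at hi
          rw [hconst i hi.1 hi.2, hp1]
        rw [this, Nat.card_Icc] at hw
        omega
      | false =>
        have : (Finset.Icc 1 M).filter (fun i => p i = true) = ∅ := by
          apply Finset.filter_false_of_mem
          intro i hi
          rw [Finset.mem_Icc] at hi
          rw [hconst i hi.1 hi.2, hp1]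
          simp
        rw [this] at hw
        simp at hw
        omega
    · -- at most M - 1 transitions
      rw [ht]
      calc ((Finset.Icc 1 (M - 1)).filter (fun k => p k ≠ p (k + 1))).card
          ≤ (Finset.Icc 1 (M - 1)).card := Finset.card_filter_le _ _
        _ = M - 1 := by rw [Nat.card_Icc]; omega
  · rintro ⟨h1, h2⟩
    rcases Nat.even_or_odd t with he | ho
    · -- t = 2s, 1 ≤ s ≤ m - 1
      obtain ⟨s, hs⟩ := he
      have hs1 : 1 ≤ s := by omega
      have hsm : s ≤ m - 1 := by omega
      refine ⟨fun i => decide ((i % 2 = 1 ∧ i ≤ 2 * s - 1) ∨ m + s + 1 ≤ i), ?_, ?_⟩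
      · have heq : (Finset.Icc 1 M).filter
            (fun i => (decide ((i % 2 = 1 ∧ i ≤ 2 * s - 1) ∨ m + s + 1 ≤ i)) = true)
            = ((Finset.Icc 1 (2 * s - 1)).filter (fun i => i % 2 = 1))
              ∪ Finset.Icc (m + s + 1) (2 * m) := by
          ext i
          simp only [Finset.mem_filter, Finset.mem_Icc, Finset.mem_union,
            decide_eq_true_eq]
          omega
        rw [heq, Finset.card_union_of_disjoint, odd_count, Nat.card_Icc]
        · omega
        · rw [Finset.disjoint_left]
          intro a ha hb
          simp only [Finset.mem_filter, Finset.mem_Icc] at ha hb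
          omega
      · have heq : (Finset.Icc 1 (M - 1)).filter
            (fun k => (decide ((k % 2 = 1 ∧ k ≤ 2 * s - 1) ∨ m + s + 1 ≤ k))
              ≠ (decide (((k + 1) % 2 = 1 ∧ k + 1 ≤ 2 * s - 1) ∨ m + s + 1 ≤ k + 1)))
            = Finset.Icc 1 (2 * s - 1) ∪ {m + s} := by
          ext k
          simp only [Finset.mem_filter, Finset.mem_Icc, Finset.mem_union,
            Finset.mem_singleton, ne_eq, decide_eq_decide]
          omega
        rw [heq, Finset.card_union_of_disjoint, Nat.card_Icc, Finset.card_singleton]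
        · omega
        · rw [Finset.disjoint_left]
          intro a ha hb
          simp only [Finset.mem_Icc] at ha
          simp only [Finset.mem_singleton] at hb
          omega
    · -- t = 2s - 1, 1 ≤ s ≤ m
      obtain ⟨s', hs⟩ := ho
      set s := s' + 1 with hsdef
      have hs1 : 1 ≤ s := by omega
      have hsm : s ≤ m := by omega
      refine ⟨fun i => decide ((i % 2 = 1 ∧ i ≤ 2 * s - 2) ∨ (2 * s - 1 ≤ i ∧ i ≤ m + s - 1)),
        ?_, ?_⟩
      · have heq : (Finset.Icc 1 M).filter
            (fun i => (decide ((i % 2 = 1 ∧ i ≤ 2 * s - 2) ∨ (2 * s - 1 ≤ i ∧ i ≤ m + s - 1))) = true)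
            = ((Finset.Icc 1 (2 * s - 2)).filter (fun i => i % 2 = 1))
              ∪ Finset.Icc (2 * s - 1) (m + s - 1) := by
          ext i
          simp only [Finset.mem_filter, Finset.mem_Icc, Finset.mem_union,
            decide_eq_true_eq]
          omega
        rw [heq, Finset.card_union_of_disjoint, odd_count, Nat.card_Icc]
        · omega
        · rw [Finset.disjoint_left]
          intro a ha hb
          simp only [Finset.mem_filter, Finset.mem_Icc] at ha hb
          omega
      · have heq : (Finset.Icc 1 (M - 1)).filter
            (fun k => (decide ((k % 2 = 1 ∧ k ≤ 2 * s - 2) ∨ (2 * s - 1 ≤ k ∧ k ≤ m + s - 1)))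
              ≠ (decide (((k + 1) % 2 = 1 ∧ k + 1 ≤ 2 * s - 2) ∨ (2 * s - 1 ≤ k + 1 ∧ k + 1 ≤ m + s - 1))))
            = Finset.Icc 1 (2 * s - 2) ∪ {m + s - 1} := by
          ext k
          simp only [Finset.mem_filter, Finset.mem_Icc, Finset.mem_union,
            Finset.mem_singleton, ne_eq, decide_eq_decide]
          omega
        rw [heq, Finset.card_union_of_disjoint, Nat.card_Icc, Finset.card_singleton]
        · omega
        · rw [Finset.disjoint_left]
          intro a ha hb
          simp only [Finset.mem_Icc] at ha
          simp only [Finset.mem_singleton] at hb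
          omega
end
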